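/- arXiv:1107.5108 — 3 statements merged into one kernel-verified Lean document; each statement's English description precedes it below -/
import Mathlib

section
/- For any rotation matrices R1, R2, R3 in SO(3), the inequality (1/2)·tr(R1ᵀR2 − R1ᵀR3R2ᵀR3) ≥ φ(R1ᵀR3) − φ(R1ᵀR2) + λ_min(sym(R1ᵀR3))·φ(R3ᵀR2) holds, where φ(R) := (1/2)‖I₃ − R‖_F² = tr(I₃ − R), sym(M) := (1/2)(M + Mᵀ), and λ_min(M) denotes the minimal eigenvalue of M. -/
open Matrix BigOperators

def SO3 (R : Matrix (Fin 3) (Fin 3) ℝ) : Prop := Rᵀ * R = 1 ∧ R.det = 1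

noncomputable def phi (R : Matrix (Fin 3) (Fin 3) ℝ) : ℝ := Matrix.trace (1 - R)

noncomputable def symPart (M : Matrix (Fin 3) (Fin 3) ℝ) : Matrix (Fin 3) (Fin 3) ℝ :=
  (1 / 2 : ℝ) • (M + Mᵀ)

noncomputable def lamMin (M : Matrix (Fin 3) (Fin 3) ℝ) : ℝ := sInf (spectrum ℝ M)

lemma trace_psd_nonneg {n : Type*} [Fintype n] [DecidableEq n] {M : Matrix n n ℝ}
    (hM : M.PosSemidef) : 0 ≤ M.trace := by
  rw [Matrix.trace]
  apply Finset.sum_nonneg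
  intro i _
  have := hM.dotProduct_mulVec_nonneg (Pi.single i 1)
  simpa [dotProduct, Pi.single_apply, Matrix.mulVec, Finset.mul_sum] using this

lemma trace_mul_psd_nonneg {n : Type*} [Fintype n] [DecidableEq n] {P Q : Matrix n n ℝ}
    (hP : P.PosSemidef) (hQ : Q.PosSemidef) : 0 ≤ (P * Q).trace := by
  open scoped MatrixOrder in obtain ⟨B, rfl⟩ := CStarAlgebra.nonneg_iff_eq_star_mul_self.mp hP.nonneg
  rw [Matrix.mul_assoc, Matrix.trace_mul_comm]
  exact trace_psd_nonneg (hQ.mul_mul_conjTranspose_same B)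

lemma symPart_isHermitian (M : Matrix (Fin 3) (Fin 3) ℝ) : (symPart M).IsHermitian := by
  unfold symPart Matrix.IsHermitian
  rw [conjTranspose_smul, conjTranspose_add]
  simp [Matrix.conjTranspose_eq_transpose_of_trivial, add_comm]

lemma one_sub_symPart_psd {B : Matrix (Fin 3) (Fin 3) ℝ} (hB : Bᵀ * B = 1) :
    (1 - symPart B).PosSemidef := by
  refine Matrix.PosSemidef.of_dotProduct_mulVec_nonneg ?_ ?_
  · exact (isHermitian_one.sub (symPart_isHermitian B))
  · intro x
    have key : dotProduct (B *ᵥ x) (B *ᵥ x) = dotProduct x x := by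
      rw [dotProduct_mulVec, ← mulVec_transpose, mulVec_mulVec, hB, one_mulVec]
    have h2 : dotProduct x (Bᵀ *ᵥ x) = dotProduct (B *ᵥ x) x := by
      rw [dotProduct_mulVec, vecMul_transpose]
    have hnn : (0:ℝ) ≤ dotProduct (x - B *ᵥ x) (x - B *ᵥ x) := by
      unfold dotProduct
      exact Finset.sum_nonneg fun i _ => mul_self_nonneg _
    have expand : dotProduct (x - B *ᵥ x) (x - B *ᵥ x)
        = dotProduct x x - dotProduct x (B *ᵥ x) - dotProduct (B *ᵥ x) x
          + dotProduct (B *ᵥ x) (B *ᵥ x) := by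
      rw [sub_dotProduct, dotProduct_sub, dotProduct_sub]
      ring
    have hstar : star x = x := by simp
    rw [hstar]
    have hmv : (1 - symPart B) *ᵥ x = x - (1/2 : ℝ) • (B *ᵥ x + Bᵀ *ᵥ x) := by
      unfold symPart
      rw [sub_mulVec, one_mulVec, smul_mulVec, add_mulVec]
    rw [hmv, dotProduct_sub, dotProduct_smul, dotProduct_add, h2]
    rw [key] at expand
    simp only [smul_eq_mul]
    nlinarith [hnn, expand]

lemma sub_lamMin_psd {S : Matrix (Fin 3) (Fin 3) ℝ} (hS : S.IsHermitian) :
    (S - sInf (spectrum ℝ S) • 1).PosSemidef := by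
  set l := sInf (spectrum ℝ S) with hl
  have hspec : spectrum ℝ S = Set.range hS.eigenvalues :=
    Matrix.IsHermitian.spectrum_real_eq_range_eigenvalues hS
  have hle : ∀ i, l ≤ hS.eigenvalues i := by
    intro i
    apply csInf_le
    · rw [hspec]; exact (Set.finite_range _).bddBelow
    · rw [hspec]; exact Set.mem_range_self i
  set U : Matrix (Fin 3) (Fin 3) ℝ := (hS.eigenvectorUnitary : Matrix (Fin 3) (Fin 3) ℝ) with hU
  have hD : diagonal (RCLike.ofReal ∘ hS.eigenvalues) - l • (1 : Matrix (Fin 3) (Fin 3) ℝ)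
      = diagonal (fun i => hS.eigenvalues i - l) := by
    ext i j
    by_cases h : i = j <;>
      simp [h, diagonal, Matrix.sub_apply, Matrix.smul_apply, Matrix.one_apply]
  have hdiag : (S - l • 1) = U * diagonal (fun i => hS.eigenvalues i - l) * (star U) := by
    have h1 : l • (1 : Matrix (Fin 3) (Fin 3) ℝ) = U * (l • 1) * (star U) := by
      rw [Matrix.mul_smul, Matrix.smul_mul, mul_one]
      rw [Unitary.mul_star_self_of_mem hS.eigenvectorUnitary.2]
    conv_lhs => rw [hS.spectral_theorem, Unitary.conjStarAlgAut_apply, h1]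
    rw [← Matrix.sub_mul, ← Matrix.mul_sub, hD]
  rw [hdiag]
  refine (Matrix.posSemidef_diagonal_iff.mpr ?_).mul_mul_conjTranspose_same _
  intro i
  simpa using hle i

lemma trace_transpose_mul_transpose (A B : Matrix (Fin 3) (Fin 3) ℝ) :
    Matrix.trace (Aᵀ * Bᵀ) = Matrix.trace (A * B) := by
  rw [← Matrix.transpose_mul, Matrix.trace_transpose, Matrix.trace_mul_comm]

lemma trace_transpose_mul (A B : Matrix (Fin 3) (Fin 3) ℝ) :
    Matrix.trace (Aᵀ * B) = Matrix.trace (A * Bᵀ) := by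
  rw [← Matrix.transpose_transpose B, ← Matrix.transpose_mul, Matrix.trace_transpose,
    Matrix.transpose_transpose, Matrix.trace_mul_comm]

theorem stmt0 (R1 R2 R3 : Matrix (Fin 3) (Fin 3) ℝ)
    (h1 : SO3 R1) (h2 : SO3 R2) (h3 : SO3 R3) :
    (1 / 2 : ℝ) * Matrix.trace (R1ᵀ * R2 - R1ᵀ * R3 * R2ᵀ * R3) ≥
      phi (R1ᵀ * R3) - phi (R1ᵀ * R2) + lamMin (symPart (R1ᵀ * R3)) * phi (R3ᵀ * R2) := by
  set A := R1ᵀ * R3 with hA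
  set B := R3ᵀ * R2 with hB
  have hR3 : R3 * R3ᵀ = 1 := mul_eq_one_comm.mp h3.1
  have hAB : R1ᵀ * R2 = A * B := by
    rw [hA, hB, Matrix.mul_assoc, ← Matrix.mul_assoc R3, hR3, Matrix.one_mul]
  have hABt : R1ᵀ * R3 * R2ᵀ * R3 = A * Bᵀ := by
    rw [hA, hB, Matrix.transpose_mul, Matrix.transpose_transpose, Matrix.mul_assoc]
  have hBo : Bᵀ * B = 1 := by
    rw [hB, Matrix.transpose_mul, Matrix.transpose_transpose, Matrix.mul_assoc,
      ← Matrix.mul_assoc R3, hR3, Matrix.one_mul, h2.1]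
  set l := lamMin (symPart A) with hldef
  have hl : l = sInf (spectrum ℝ (symPart A)) := rfl
  have hkey : 0 ≤ Matrix.trace ((symPart A - l • 1) * (1 - symPart B)) := by
    rw [hl]
    exact trace_mul_psd_nonneg (sub_lamMin_psd (symPart_isHermitian A))
      (one_sub_symPart_psd hBo)
  have hexp : Matrix.trace ((symPart A - l • 1) * (1 - symPart B))
      = Matrix.trace A - (1/2) * Matrix.trace (A * B) - (1/2) * Matrix.trace (A * Bᵀ)
        - l * (3 - Matrix.trace B) := by
    unfold symPart
    simp only [Matrix.sub_mul, Matrix.mul_sub, Matrix.mul_one, Matrix.one_mul,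
      Matrix.smul_mul, Matrix.mul_smul, Matrix.add_mul, Matrix.mul_add,
      Matrix.trace_sub, Matrix.trace_add, Matrix.trace_smul, Matrix.trace_transpose,
      smul_eq_mul, Matrix.trace_one, trace_transpose_mul_transpose, _root_.trace_transpose_mul,
      Matrix.transpose_transpose, Fintype.card_fin]
    push_cast
    ring
  rw [ge_iff_le, hAB, hABt]
  unfold phi
  rw [Matrix.trace_sub, Matrix.trace_sub, Matrix.trace_sub, Matrix.trace_sub, Matrix.trace_one]
  simp only [Fintype.card_fin]
  push_cast
  rw [hexp] at hkey
  linarith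
end

section
/- Let R* and R̄ be rotation matrices in SO(3) such that φ((R*)ᵀR̄) < φ_0 for some φ_0 > 0, where φ(R) := tr(I₃ − R). Then λ_min(sym((R*)ᵀR̄)) ≥ 1 − √(2φ_0). -/
open Matrix BigOperators

lemma eig_of_mem_spectrum (M : Matrix (Fin 3) (Fin 3) ℝ) (μ : ℝ) (h : μ ∈ spectrum ℝ M) :
    ∃ v : Fin 3 → ℝ, v ≠ 0 ∧ M.mulVec v = μ • v := by
  rw [spectrum.mem_iff] at h
  rw [Matrix.isUnit_iff_isUnit_det, isUnit_iff_ne_zero, not_not,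
      ← Matrix.exists_mulVec_eq_zero_iff] at h
  obtain ⟨v, hv, hv2⟩ := h
  refine ⟨v, hv, ?_⟩
  have ha : (algebraMap ℝ (Matrix (Fin 3) (Fin 3) ℝ) μ).mulVec v = μ • v := by
    ext i
    simp [Matrix.algebraMap_eq_diagonal, Matrix.mulVec_diagonal]
  rw [Matrix.sub_mulVec, ha, sub_eq_zero] at hv2
  exact hv2.symm

theorem stmt3 (Rstar Rbar : Matrix (Fin 3) (Fin 3) ℝ)
    (hs : SO3 Rstar) (hb : SO3 Rbar) (φ0 : ℝ) (hφ0 : 0 < φ0)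
    (h : phi (Rstarᵀ * Rbar) < φ0) :
    lamMin (symPart (Rstarᵀ * Rbar)) ≥ 1 - Real.sqrt (2 * φ0) := by
  set Q : Matrix (Fin 3) (Fin 3) ℝ := Rstarᵀ * Rbar with hQdef
  -- Q is orthogonal
  have hss : Rstar * Rstarᵀ = 1 := mul_eq_one_comm.mp hs.1
  have hQ : Qᵀ * Q = 1 := by
    rw [hQdef, Matrix.transpose_mul, Matrix.transpose_transpose]
    calc Rbarᵀ * Rstar * (Rstarᵀ * Rbar) = Rbarᵀ * (Rstar * Rstarᵀ) * Rbar := by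
          noncomm_ring
      _ = 1 := by rw [hss, mul_one, hb.1]
  set S : Matrix (Fin 3) (Fin 3) ℝ := symPart Q with hSdef
  -- Frobenius norm squared of (1 - Q) equals 2 * phi Q
  set M : Matrix (Fin 3) (Fin 3) ℝ := 1 - Q with hMdef
  have hF : ∑ i, ∑ j, M i j ^ 2 = 2 * phi Q := by
    have htr : Matrix.trace (Mᵀ * M) = ∑ j, ∑ i, M i j ^ 2 := by
      simp [Matrix.trace, Matrix.diag, Matrix.mul_apply, sq]
    have hMM : Mᵀ * M = (2 : ℝ) • (1 : Matrix (Fin 3) (Fin 3) ℝ) - Q - Qᵀ := by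
      rw [hMdef]
      have ht : ((1 : Matrix (Fin 3) (Fin 3) ℝ) - Q)ᵀ = 1 - Qᵀ := by
        rw [Matrix.transpose_sub, Matrix.transpose_one]
      have hexp : ((1 : Matrix (Fin 3) (Fin 3) ℝ) - Qᵀ) * (1 - Q)
          = 1 - Q - Qᵀ + Qᵀ * Q := by noncomm_ring
      rw [ht, hexp, hQ]
      module
    have h2 : Matrix.trace (Mᵀ * M) = 2 * phi Q := by
      rw [hMM]
      simp only [Matrix.trace_sub, Matrix.trace_smul, Matrix.trace_transpose, phi,
        Matrix.trace_sub, smul_eq_mul]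
      ring
    rw [Finset.sum_comm, ← htr, h2]
  have hFnn : 0 ≤ 2 * phi Q := by
    rw [← hF]
    exact Finset.sum_nonneg fun i _ => Finset.sum_nonneg fun j _ => sq_nonneg _
  -- key bound for every spectrum element
  have key : ∀ μ ∈ spectrum ℝ S, 1 - Real.sqrt (2 * φ0) ≤ μ := by
    intro μ hμ
    obtain ⟨v, hv0, hv⟩ := eig_of_mem_spectrum S μ hμ
    set n2 : ℝ := ∑ i, v i ^ 2 with hn2
    have hn2pos : 0 < n2 := by
      rcases Function.ne_iff.mp hv0 with ⟨i, hi⟩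
      have : 0 < v i ^ 2 := lt_of_le_of_ne (sq_nonneg _) (Ne.symm (pow_ne_zero 2 hi))
      exact lt_of_lt_of_le this (Finset.single_le_sum
        (fun j _ => sq_nonneg (v j)) (Finset.mem_univ i))
    -- v ⬝ᵥ S.mulVec v = μ * n2
    have hvsv : v ⬝ᵥ S.mulVec v = μ * n2 := by
      rw [hv]
      simp only [dotProduct, Pi.smul_apply, smul_eq_mul, hn2, Finset.mul_sum]
      exact Finset.sum_congr rfl fun i _ => by ring
    -- v ⬝ᵥ Q.mulVec v = v ⬝ᵥ S.mulVec v
    have hsym : v ⬝ᵥ Qᵀ.mulVec v = v ⬝ᵥ Q.mulVec v := by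
      rw [Matrix.dotProduct_mulVec, Matrix.vecMul_transpose, dotProduct_comm]
    have hvqv : v ⬝ᵥ Q.mulVec v = μ * n2 := by
      have : v ⬝ᵥ S.mulVec v = (1 / 2 : ℝ) * (v ⬝ᵥ Q.mulVec v + v ⬝ᵥ Qᵀ.mulVec v) := by
        rw [hSdef]
        simp only [symPart, Matrix.add_mulVec, Matrix.smul_mulVec,
          dotProduct_add, dotProduct_smul, smul_eq_mul]
      rw [this, hsym] at hvsv
      linarith
    -- w := M.mulVec v
    set w : Fin 3 → ℝ := M.mulVec v with hw
    have hvw : v ⬝ᵥ w = (1 - μ) * n2 := by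
      rw [hw, hMdef, Matrix.sub_mulVec, dotProduct_sub, Matrix.one_mulVec, hvqv]
      have : v ⬝ᵥ v = n2 := by simp [dotProduct, hn2, sq]
      rw [this]; ring
    -- ∑ w i ^2 ≤ 2 * phi Q * n2
    have hwbound : ∑ i, w i ^ 2 ≤ (2 * phi Q) * n2 := by
      rw [← hF, Finset.sum_mul]
      apply Finset.sum_le_sum
      intro i _
      have := Finset.sum_mul_sq_le_sq_mul_sq Finset.univ (fun j => M i j) v
      simpa [hw, Matrix.mulVec, dotProduct, hn2] using this
    -- Cauchy-Schwarz
    have hCS : (v ⬝ᵥ w) ^ 2 ≤ n2 * ∑ i, w i ^ 2 := by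
      have := Finset.sum_mul_sq_le_sq_mul_sq Finset.univ v w
      simpa [dotProduct, hn2] using this
    have hmain : (1 - μ) ^ 2 * n2 ^ 2 ≤ (2 * phi Q) * n2 ^ 2 := by
      have h1 : ((1 - μ) * n2) ^ 2 ≤ n2 * ((2 * phi Q) * n2) := by
        rw [← hvw]
        exact le_trans hCS (by nlinarith [hwbound, hn2pos])
      nlinarith [h1]
    have hsq : (1 - μ) ^ 2 ≤ 2 * phi Q := by
      have hn4 : 0 < n2 ^ 2 := by positivity
      exact le_of_mul_le_mul_right (by linarith [hmain]) hn4
    have habs : |1 - μ| ≤ Real.sqrt (2 * phi Q) := Real.abs_le_sqrt hsq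
    have hmono : Real.sqrt (2 * phi Q) ≤ Real.sqrt (2 * φ0) :=
      Real.sqrt_le_sqrt (by unfold Q; linarith [h])
    have : 1 - μ ≤ Real.sqrt (2 * φ0) :=
      le_trans (le_trans (le_abs_self _) habs) hmono
    linarith
  -- nonemptiness of spectrum
  have hHerm : S.IsHermitian := by
    rw [hSdef]
    unfold symPart
    ext i j
    simp [Matrix.conjTranspose_apply, Matrix.transpose_apply]
    ring
  have hne : (spectrum ℝ S).Nonempty :=
    ⟨hHerm.eigenvalues 0, hHerm.eigenvalues_mem_spectrum_real 0⟩
  exact le_csInf hne key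
end

section
/- Let q_1,…,q_n ∈ ℝ³ and let G_T be a spanning tree rooted at node j* of an undirected graph G_u on {1,…,n}. For each node i let d(i) be the length of the tree path P(i) from j* to i, and for each tree edge E let δ(E;i) = 1 if P(i) contains E and 0 otherwise. Define W' := max over tree edges E of ∑_i δ(E;i)·d(i). Then ∑_{i=1}^n ‖q_i − q_{j*}‖² ≤ W' · ∑_{E=(u,v) ∈ edges(G_T)} ‖q_u − q_v‖². -/
open BigOperators

open Classical in
/-- Tree-path bound: `∑ i ‖q_i − q_{j*}‖² ≤ W' · ∑_{edges} ‖q_u − q_v‖²`, where for each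
node `i` the tree path from the root `j*` to `i` is `path i 0 = j*, …, path i (d i) = i`,
its edges (assumed distinct) belong to the tree edge set, and `W'` bounds
`∑ i δ(E;i)·d(i)` for every tree edge `E`. -/
theorem stmt13 (n : ℕ) (q : Fin n → EuclideanSpace ℝ (Fin 3)) (jstar : Fin n)
    (edges : Finset (Fin n × Fin n)) (path : Fin n → ℕ → Fin n) (d : Fin n → ℕ)
    (hstart : ∀ i, path i 0 = jstar) (hend : ∀ i, path i (d i) = i)
    (hedge : ∀ i, ∀ l < d i, (path i l, path i (l + 1)) ∈ edges)
    (hdistinct : ∀ i, ∀ l < d i, ∀ l' < d i,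
      (path i l, path i (l + 1)) = (path i l', path i (l' + 1)) → l = l')
    (W' : ℝ)
    (hW' : ∀ E ∈ edges,
      (∑ i, if (∃ l < d i, (path i l, path i (l + 1)) = E) then (d i : ℝ) else 0) ≤ W') :
    ∑ i, ‖q i - q jstar‖ ^ 2 ≤ W' * ∑ E ∈ edges, ‖q E.1 - q E.2‖ ^ 2 := by
  classical
  set F : Fin n × Fin n → ℝ := fun E => ‖q E.1 - q E.2‖ ^ 2 with hF
  have hFnn : ∀ E, 0 ≤ F E := fun E => sq_nonneg _
  have key : ∀ i : Fin n, ‖q i - q jstar‖ ^ 2 ≤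
      (d i : ℝ) * ∑ E ∈ edges,
        (if (∃ l < d i, (path i l, path i (l + 1)) = E) then F E else 0) := by
    intro i
    set e : ℕ → Fin n × Fin n := fun l => (path i l, path i (l + 1)) with he
    have htel : q i - q jstar
        = ∑ l ∈ Finset.range (d i), (q (path i (l + 1)) - q (path i l)) := by
      rw [Finset.sum_range_sub (fun l => q (path i l)), hend, hstart]
    have h1 : ‖q i - q jstar‖
        ≤ ∑ l ∈ Finset.range (d i), ‖q (path i (l + 1)) - q (path i l)‖ := by
      rw [htel]; exact norm_sum_le _ _
    have h2 : ‖q i - q jstar‖ ^ 2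
        ≤ (∑ l ∈ Finset.range (d i), ‖q (path i (l + 1)) - q (path i l)‖) ^ 2 :=
      pow_le_pow_left₀ (norm_nonneg _) h1 2
    have h3 := sq_sum_le_card_mul_sum_sq
      (s := Finset.range (d i)) (f := fun l => ‖q (path i (l + 1)) - q (path i l)‖)
    rw [Finset.card_range] at h3
    have hsq : ∀ l, ‖q (path i (l + 1)) - q (path i l)‖ ^ 2 = F (e l) := by
      intro l; simp [hF, he, norm_sub_rev]
    have himg : ∑ l ∈ Finset.range (d i), F (e l)
        = ∑ E ∈ (Finset.range (d i)).image e, F E := by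
      rw [Finset.sum_image]
      intro l hl l' hl' hll'
      exact hdistinct i l (Finset.mem_range.mp hl) l' (Finset.mem_range.mp hl') hll'
    have hsub : (Finset.range (d i)).image e ⊆ edges := by
      intro E hE
      obtain ⟨l, hl, rfl⟩ := Finset.mem_image.mp hE
      exact hedge i l (Finset.mem_range.mp hl)
    have hset : ∑ E ∈ (Finset.range (d i)).image e, F E
        = ∑ E ∈ edges, (if (∃ l < d i, (path i l, path i (l + 1)) = E) then F E else 0) := by
      rw [Finset.sum_congr rfl (g := fun E =>
        if (∃ l < d i, (path i l, path i (l + 1)) = E) then F E else 0)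
        (fun E hE => ?_)]
      · exact Finset.sum_subset hsub (fun E _ hE => by
          rw [if_neg]
          intro ⟨l, hl, hEl⟩
          exact hE (Finset.mem_image.mpr ⟨l, Finset.mem_range.mpr hl, hEl⟩))
      · obtain ⟨l, hl, rfl⟩ := Finset.mem_image.mp hE
        show F (e l) = if _ then F (e l) else 0
        rw [if_pos ⟨l, Finset.mem_range.mp hl, rfl⟩]
    calc ‖q i - q jstar‖ ^ 2
        ≤ (∑ l ∈ Finset.range (d i), ‖q (path i (l + 1)) - q (path i l)‖) ^ 2 := h2
      _ ≤ (d i : ℝ) * ∑ l ∈ Finset.range (d i), ‖q (path i (l + 1)) - q (path i l)‖ ^ 2 := h3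
      _ = (d i : ℝ) * ∑ E ∈ edges,
            (if (∃ l < d i, (path i l, path i (l + 1)) = E) then F E else 0) := by
          rw [Finset.sum_congr rfl (fun l _ => hsq l), himg, hset]
  calc ∑ i, ‖q i - q jstar‖ ^ 2
      ≤ ∑ i, (d i : ℝ) * ∑ E ∈ edges,
          (if (∃ l < d i, (path i l, path i (l + 1)) = E) then F E else 0) :=
        Finset.sum_le_sum (fun i _ => key i)
    _ = ∑ E ∈ edges,
          (∑ i, if (∃ l < d i, (path i l, path i (l + 1)) = E) then (d i : ℝ) else 0) * F E := by
        simp_rw [Finset.mul_sum]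
        rw [Finset.sum_comm]
        refine Finset.sum_congr rfl (fun E _ => ?_)
        rw [Finset.sum_mul]
        refine Finset.sum_congr rfl (fun i _ => ?_)
        by_cases h : (∃ l < d i, (path i l, path i (l + 1)) = E) <;> simp [h]
    _ ≤ ∑ E ∈ edges, W' * F E :=
        Finset.sum_le_sum (fun E hE => mul_le_mul_of_nonneg_right (hW' E hE) (hFnn E))
    _ = W' * ∑ E ∈ edges, F E := by rw [Finset.mul_sum]
end
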